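/- Equivalence of the finite reduction and the ambiguous dual best problem: under assumptions (G), (C), (H) and (S), the suprema of (FR) and (AD-B) coincide, and (FR) is solvable if and only if (AD-B) is solvable. -/

import Mathlib

noncomputable section
open scoped BigOperators Classical ENNReal
open MeasureTheory

/-- Dot product on `ℝ^n`. -/
def dotp {n : ℕ} (x y : Fin n → ℝ) : ℝ := ∑ i, x i * y i

/-- The (effective) domain of an extended-real-valued function. -/
def edom {n : ℕ} (f : (Fin n → ℝ) → EReal) : Set (Fin n → ℝ) := {x | f x < ⊤}

/-- `f` is proper: it never takes the value `−∞` and is `< +∞` somewhere. -/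
def ProperFn {n : ℕ} (f : (Fin n → ℝ) → EReal) : Prop := (∀ x, f x ≠ ⊥) ∧ (∃ x, f x ≠ ⊤)

/-- `f` is closed: lower semicontinuous, and either nowhere `−∞` or identically `−∞`. -/
def ClosedFn {n : ℕ} (f : (Fin n → ℝ) → EReal) : Prop :=
  LowerSemicontinuous f ∧ ((∀ x, f x ≠ ⊥) ∨ (∀ x, f x = ⊥))

/-- Convexity of an extended-real-valued function, via convexity of its epigraph. -/
def ConvexFn {n : ℕ} (f : (Fin n → ℝ) → EReal) : Prop :=
  Convex ℝ {p : (Fin n → ℝ) × ℝ | f p.1 ≤ (p.2 : EReal)}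

/-- The conjugate `f*(w) = sup_x { wᵀx − f(x) }`. -/
def conjFn {n : ℕ} (f : (Fin n → ℝ) → EReal) (w : Fin n → ℝ) : EReal :=
  ⨆ x : Fin n → ℝ, (((dotp w x : ℝ) : EReal) - f x)

/-- The support function `δ*_X(w) = sup_{x ∈ X} xᵀw`. -/
def suppFn {n : ℕ} (X : Set (Fin n → ℝ)) (w : Fin n → ℝ) : EReal :=
  ⨆ x ∈ X, ((dotp x w : ℝ) : EReal)

/-- The convex perspective `t f(x/t)` of a proper closed convex function `f`,
equal to `t f(x/t)` for `t > 0` and to `δ*_{dom f*}(x)` for `t = 0`. -/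
def persp {n : ℕ} (f : (Fin n → ℝ) → EReal) (x : Fin n → ℝ) (t : ℝ) : EReal :=
  if 0 < t then (t : EReal) * f (t⁻¹ • x) else suppFn (edom (conjFn f)) x

/-- The concave perspective `t g(x/t)` of a function `g` with `−g` proper, closed and
convex, equal to `t g(x/t)` for `t > 0` and to `−δ*_{dom (−g)*}(x)` for `t = 0`. -/
def cpersp {n : ℕ} (g : (Fin n → ℝ) → EReal) (x : Fin n → ℝ) (t : ℝ) : EReal :=
  if 0 < t then (t : EReal) * g (t⁻¹ • x)
  else - suppFn (edom (conjFn (fun z => - g z))) x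

/-- `f` is an affine ("linear") constraint function. -/
def IsAffineFn {n : ℕ} (f : (Fin n → ℝ) → EReal) : Prop :=
  ∃ (a : Fin n → ℝ) (b : ℝ), ∀ x, f x = ((dotp a x + b : ℝ) : EReal)

/-- Positive part of an extended real number, as an extended non-negative real. -/
def epos (x : EReal) : ℝ≥0∞ := if x = ⊤ then ⊤ else ENNReal.ofReal x.toReal

/-- Expectation `E_P[f(z̃)]` with the convention that it equals `−∞` whenever the
expectations of the positive and negative parts of `f(z̃)` are both infinite
(infeasibility dominates in maximization). -/
def lowExp {n : ℕ} (P : Measure (Fin n → ℝ)) (f : (Fin n → ℝ) → EReal) : EReal :=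
  ((∫⁻ z, epos (f z) ∂P : ℝ≥0∞) : EReal) - ((∫⁻ z, epos (-(f z)) ∂P : ℝ≥0∞) : EReal)

/-- Expectation `E_P[f(z̃)]` with the convention that it equals `+∞` whenever the
expectations of the positive and negative parts of `f(z̃)` are both infinite
(infeasibility dominates in the moment constraints). -/
def highExp {n : ℕ} (P : Measure (Fin n → ℝ)) (f : (Fin n → ℝ) → EReal) : EReal :=
  - lowExp P (fun z => - f z)

variable {dz I J L : ℕ}

/-- Assumption (G): `−g_i` is proper, closed and convex for each `i`. -/
def AssumptionG (gi : Fin I → (Fin dz → ℝ) → EReal) : Prop :=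
  ∀ i, ProperFn (fun z => - gi i z) ∧ ClosedFn (fun z => - gi i z) ∧
    ConvexFn (fun z => - gi i z)

/-- Assumption (C): each `c_ℓ` is proper, closed and convex. -/
def AssumptionC (c : Fin L → (Fin dz → ℝ) → EReal) : Prop :=
  ∀ ℓ, ProperFn (c ℓ) ∧ ClosedFn (c ℓ) ∧ ConvexFn (c ℓ)

/-- Assumption (H): each `h_j` is proper, closed and convex. -/
def AssumptionH (h : Fin J → (Fin dz → ℝ) → EReal) : Prop :=
  ∀ j, ProperFn (h j) ∧ ClosedFn (h j) ∧ ConvexFn (h j)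

/-- The support set `S = {z : c_ℓ(z) ≤ 0 ∀ℓ}`. -/
def Sset (c : Fin L → (Fin dz → ℝ) → EReal) : Set (Fin dz → ℝ) :=
  {z | ∀ ℓ, c ℓ z ≤ 0}

/-- The set `S̄_i = {z ∈ S : z ∈ dom h_j ∀j, z ∈ dom(−g_i)}`. -/
def SbarI (gi : Fin I → (Fin dz → ℝ) → EReal) (c : Fin L → (Fin dz → ℝ) → EReal)
    (h : Fin J → (Fin dz → ℝ) → EReal) (i : Fin I) : Set (Fin dz → ℝ) :=
  {z | z ∈ Sset c ∧ (∀ j, h j z < ⊤) ∧ ⊥ < gi i z}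

/-- The effective support set `S̄ = ∪_i S̄_i`. -/
def Sbar (gi : Fin I → (Fin dz → ℝ) → EReal) (c : Fin L → (Fin dz → ℝ) → EReal)
    (h : Fin J → (Fin dz → ℝ) → EReal) : Set (Fin dz → ℝ) :=
  ⋃ i, SbarI gi c h i

/-- Assumption (S): each `S̄_i` is nonempty. -/
def AssumptionS (gi : Fin I → (Fin dz → ℝ) → EReal)
    (c : Fin L → (Fin dz → ℝ) → EReal) (h : Fin J → (Fin dz → ℝ) → EReal) : Prop :=
  ∀ i, (SbarI gi c h i).Nonempty

/-- The disutility function `g(z) = max_i g_i(z)`. -/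
def gFun (gi : Fin I → (Fin dz → ℝ) → EReal) (z : Fin dz → ℝ) : EReal :=
  ⨆ i, gi i z

/-- The ambiguity set `𝒫` of all probability distributions supported on `S`
satisfying the moment conditions `E_P[h_j(z̃)] ≤ μ_j`. -/
def ambSet (c : Fin L → (Fin dz → ℝ) → EReal) (h : Fin J → (Fin dz → ℝ) → EReal)
    (μ : Fin J → ℝ) : Set (Measure (Fin dz → ℝ)) :=
  {P | IsProbabilityMeasure P ∧ P (Sset c) = 1 ∧
       ∀ j, highExp P (h j) ≤ ((μ j : ℝ) : EReal)}

/-- Optimal value of the primal uncertainty quantification problem (P-UQ). -/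
def puqVal (gi : Fin I → (Fin dz → ℝ) → EReal) (c : Fin L → (Fin dz → ℝ) → EReal)
    (h : Fin J → (Fin dz → ℝ) → EReal) (μ : Fin J → ℝ) : EReal :=
  ⨆ P ∈ {P | P ∈ ambSet c h μ ∧ lowExp P (gFun gi) ≠ ⊥}, lowExp P (gFun gi)

/-- Feasible region of the dual uncertainty quantification problem (D-UQ). -/
def duqFeas (gi : Fin I → (Fin dz → ℝ) → EReal) (c : Fin L → (Fin dz → ℝ) → EReal)
    (h : Fin J → (Fin dz → ℝ) → EReal) : Set (ℝ × (Fin J → ℝ)) :=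
  {p | (∀ j, 0 ≤ p.2 j) ∧
       ∀ z ∈ Sbar gi c h, gFun gi z ≤ (p.1 : EReal) + ∑ j, (p.2 j : EReal) * h j z}

/-- Optimal value of the dual uncertainty quantification problem (D-UQ). -/
def duqVal (gi : Fin I → (Fin dz → ℝ) → EReal) (c : Fin L → (Fin dz → ℝ) → EReal)
    (h : Fin J → (Fin dz → ℝ) → EReal) (μ : Fin J → ℝ) : EReal :=
  ⨅ p ∈ duqFeas gi c h, ((p.1 + dotp μ p.2 : ℝ) : EReal)

/-- (D-UQ) is solvable. -/
def duqSolvable (gi : Fin I → (Fin dz → ℝ) → EReal) (c : Fin L → (Fin dz → ℝ) → EReal)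
    (h : Fin J → (Fin dz → ℝ) → EReal) (μ : Fin J → ℝ) : Prop :=
  duqFeas gi c h = ∅ ∨
    ∃ p ∈ duqFeas gi c h, ((p.1 + dotp μ p.2 : ℝ) : EReal) = duqVal gi c h μ

/-- The augmented support set
`U_i = {(z,u,t) : c_ℓ(z) ≤ 0 ∀ℓ, h(z) ≤ u, g_i(z) ≥ t}`. -/
def Uset {dz I J L : ℕ} (gi : Fin I → (Fin dz → ℝ) → EReal)
    (c : Fin L → (Fin dz → ℝ) → EReal) (h : Fin J → (Fin dz → ℝ) → EReal)
    (i : Fin I) : Set ((Fin dz → ℝ) × (Fin J → ℝ) × ℝ) :=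
  {q | (∀ ℓ, c ℓ q.1 ≤ 0) ∧ (∀ j, h j q.1 ≤ ((q.2.1 j : ℝ) : EReal)) ∧
       ((q.2.2 : ℝ) : EReal) ≤ gi i q.1}

/-- Feasible region of the ambiguous primal worst problem (AP-W): `β ≥ 0` and
`sup_{(z,u,t) ∈ U_i} { t − α − uᵀβ } ≤ 0` for every `i`. -/
def apwFeas {dz I J L : ℕ} (gi : Fin I → (Fin dz → ℝ) → EReal)
    (c : Fin L → (Fin dz → ℝ) → EReal) (h : Fin J → (Fin dz → ℝ) → EReal) :
    Set (ℝ × (Fin J → ℝ)) :=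
  {p | (∀ j, 0 ≤ p.2 j) ∧
       ∀ i, ∀ q ∈ Uset gi c h i, q.2.2 - p.1 - dotp q.2.1 p.2 ≤ 0}

/-- Optimal value of the ambiguous primal worst problem (AP-W). -/
def apwVal {dz I J L : ℕ} (gi : Fin I → (Fin dz → ℝ) → EReal)
    (c : Fin L → (Fin dz → ℝ) → EReal) (h : Fin J → (Fin dz → ℝ) → EReal)
    (μ : Fin J → ℝ) : EReal :=
  ⨅ p ∈ apwFeas gi c h, ((p.1 + dotp μ p.2 : ℝ) : EReal)

/-- (AP-W) is solvable. -/
def apwSolvable {dz I J L : ℕ} (gi : Fin I → (Fin dz → ℝ) → EReal)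
    (c : Fin L → (Fin dz → ℝ) → EReal) (h : Fin J → (Fin dz → ℝ) → EReal)
    (μ : Fin J → ℝ) : Prop :=
  apwFeas gi c h = ∅ ∨
    ∃ p ∈ apwFeas gi c h, ((p.1 + dotp μ p.2 : ℝ) : EReal) = apwVal gi c h μ

/-- Objective of the finite reduction problem (FR): `Σ_i λ_i g(z_i)`. -/
def frObj {dz I : ℕ} (gi : Fin I → (Fin dz → ℝ) → EReal)
    (p : (Fin I → Fin dz → ℝ) × (Fin I → ℝ)) : EReal :=
  ∑ i, ((p.2 i : ℝ) : EReal) * gFun gi (p.1 i)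

/-- Feasible region of the finite reduction problem (FR). -/
def frFeas {dz I J L : ℕ} (gi : Fin I → (Fin dz → ℝ) → EReal)
    (c : Fin L → (Fin dz → ℝ) → EReal) (h : Fin J → (Fin dz → ℝ) → EReal)
    (μ : Fin J → ℝ) : Set ((Fin I → Fin dz → ℝ) × (Fin I → ℝ)) :=
  {p | (∀ i, p.1 i ∈ Sbar gi c h) ∧ (∀ i, 0 ≤ p.2 i) ∧ (∑ i, p.2 i) = 1 ∧
       (∀ j, (∑ i, ((p.2 i : ℝ) : EReal) * h j (p.1 i)) ≤ ((μ j : ℝ) : EReal)) ∧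
       frObj gi p ≠ ⊥}

/-- Optimal value of the finite reduction problem (FR). -/
def frVal {dz I J L : ℕ} (gi : Fin I → (Fin dz → ℝ) → EReal)
    (c : Fin L → (Fin dz → ℝ) → EReal) (h : Fin J → (Fin dz → ℝ) → EReal)
    (μ : Fin J → ℝ) : EReal :=
  ⨆ p ∈ frFeas gi c h μ, frObj gi p

/-- (FR) is solvable. -/
def frSolvable {dz I J L : ℕ} (gi : Fin I → (Fin dz → ℝ) → EReal)
    (c : Fin L → (Fin dz → ℝ) → EReal) (h : Fin J → (Fin dz → ℝ) → EReal)
    (μ : Fin J → ℝ) : Prop :=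
  frFeas gi c h μ = ∅ ∨ ∃ p ∈ frFeas gi c h μ, frObj gi p = frVal gi c h μ

/-- Feasible region of the ambiguous dual best problem (AD-B). -/
def adbFeas {dz I J L : ℕ} (gi : Fin I → (Fin dz → ℝ) → EReal)
    (c : Fin L → (Fin dz → ℝ) → EReal) (h : Fin J → (Fin dz → ℝ) → EReal)
    (μ : Fin J → ℝ) :
    Set ((Fin I → (Fin dz → ℝ) × (Fin J → ℝ) × ℝ) × (Fin I → ℝ)) :=
  {p | (∀ i, p.1 i ∈ Uset gi c h i) ∧ (∀ i, 0 ≤ p.2 i) ∧ (∑ i, p.2 i) = 1 ∧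
       (∀ j, (∑ i, p.2 i * (p.1 i).2.1 j) ≤ μ j)}

/-- Optimal value of the ambiguous dual best problem (AD-B). -/
def adbVal {dz I J L : ℕ} (gi : Fin I → (Fin dz → ℝ) → EReal)
    (c : Fin L → (Fin dz → ℝ) → EReal) (h : Fin J → (Fin dz → ℝ) → EReal)
    (μ : Fin J → ℝ) : EReal :=
  ⨆ p ∈ adbFeas gi c h μ, (((∑ i, p.2 i * (p.1 i).2.2 : ℝ)) : EReal)

/-- (AD-B) is solvable. -/
def adbSolvable {dz I J L : ℕ} (gi : Fin I → (Fin dz → ℝ) → EReal)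
    (c : Fin L → (Fin dz → ℝ) → EReal) (h : Fin J → (Fin dz → ℝ) → EReal)
    (μ : Fin J → ℝ) : Prop :=
  adbFeas gi c h μ = ∅ ∨
    ∃ p ∈ adbFeas gi c h μ,
      (((∑ i, p.2 i * (p.1 i).2.2 : ℝ)) : EReal) = adbVal gi c h μ


/-! ### Auxiliary lemmas for the proof -/

private lemma ecoe_sum {ι : Type*} (s : Finset ι) (f : ι → ℝ) :
    ((∑ i ∈ s, f i : ℝ) : EReal) = ∑ i ∈ s, ((f i : ℝ) : EReal) := by
  classical
  induction s using Finset.induction with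
  | empty => simp
  | insert _ _ hx ih =>
    rw [Finset.sum_insert hx, Finset.sum_insert hx, EReal.coe_add, ih]

private lemma convexFn_combo {n : ℕ} {f : (Fin n → ℝ) → EReal} (hf : ConvexFn f)
    {ι : Type*} (t : Finset ι) (ν : ι → ℝ) (x : ι → Fin n → ℝ) (r : ι → ℝ)
    (h0 : ∀ i ∈ t, 0 ≤ ν i) (h1 : ∑ i ∈ t, ν i = 1)
    (hle : ∀ i ∈ t, f (x i) ≤ ((r i : ℝ) : EReal)) :
    f (∑ i ∈ t, ν i • x i) ≤ ((∑ i ∈ t, ν i * r i : ℝ) : EReal) := by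
  have hmem : (∑ i ∈ t, ν i • ((x i, r i) : (Fin n → ℝ) × ℝ)) ∈
      {p : (Fin n → ℝ) × ℝ | f p.1 ≤ (p.2 : EReal)} :=
    hf.sum_mem h0 h1 (fun i hi => hle i hi)
  have h1' : (∑ i ∈ t, ν i • ((x i, r i) : (Fin n → ℝ) × ℝ)).1 = ∑ i ∈ t, ν i • x i := by
    rw [Prod.fst_sum]; simp
  have h2' : (∑ i ∈ t, ν i • ((x i, r i) : (Fin n → ℝ) × ℝ)).2 = ∑ i ∈ t, ν i * r i := by
    rw [Prod.snd_sum]; simp [smul_eq_mul]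
  rw [Set.mem_setOf_eq, h1', h2'] at hmem
  exact hmem

private lemma gFun_attained {dz I : ℕ} (hI : Nonempty (Fin I))
    (gi : Fin I → (Fin dz → ℝ) → EReal) (z : Fin dz → ℝ) :
    ∃ m, gFun gi z = gi m z := by
  obtain ⟨m, hm⟩ := Finite.exists_max (fun m => gi m z)
  exact ⟨m, le_antisymm (iSup_le hm)
    (show gi m z ≤ ⨆ m', gi m' z from le_iSup (fun m' => gi m' z) m)⟩

private lemma gi_ne_top {dz I : ℕ} {gi : Fin I → (Fin dz → ℝ) → EReal}
    (hG : AssumptionG gi) (m : Fin I) (z : Fin dz → ℝ) : gi m z ≠ ⊤ := by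
  intro ht
  exact (hG m).1.1 z (show -gi m z = ⊥ by rw [ht]; exact EReal.neg_top)

private lemma gFun_ne_top {dz I : ℕ} {gi : Fin I → (Fin dz → ℝ) → EReal}
    (hG : AssumptionG gi) (hI : Nonempty (Fin I)) (z : Fin dz → ℝ) : gFun gi z ≠ ⊤ := by
  obtain ⟨m, hm⟩ := gFun_attained hI gi z
  rw [hm]; exact gi_ne_top hG m z

/-- Mapping a feasible point of (AD-B) to a feasible point of (FR) with at least
the same objective value. -/
private lemma adb_to_fr {dz I J L : ℕ}
    {gi : Fin I → (Fin dz → ℝ) → EReal} {c : Fin L → (Fin dz → ℝ) → EReal}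
    {h : Fin J → (Fin dz → ℝ) → EReal} {μ : Fin J → ℝ}
    (hG : AssumptionG gi) (hH : AssumptionH h)
    {p : (Fin I → (Fin dz → ℝ) × (Fin J → ℝ) × ℝ) × (Fin I → ℝ)}
    (hp : p ∈ adbFeas gi c h μ) :
    ((fun i => (p.1 i).1, p.2) ∈ frFeas gi c h μ) ∧
    (((∑ i, p.2 i * (p.1 i).2.2 : ℝ)) : EReal) ≤ frObj gi (fun i => (p.1 i).1, p.2) := by
  obtain ⟨hU, hl0, hl1, hmom⟩ := hp
  have hI : Nonempty (Fin I) := by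
    rcases Nat.eq_zero_or_pos I with hI0 | hI0
    · exfalso; subst hI0; simp at hl1
    · exact ⟨⟨0, hI0⟩⟩
  set z : Fin I → Fin dz → ℝ := fun i => (p.1 i).1 with hz
  -- basic facts
  have hgi_le : ∀ i, (((p.1 i).2.2 : ℝ) : EReal) ≤ gFun gi (z i) :=
    fun i => le_trans (hU i).2.2 (le_iSup (fun m => gi m (z i)) i)
  have hg_ne_top : ∀ i, gFun gi (z i) ≠ ⊤ := fun i => gFun_ne_top hG hI (z i)
  have hg_ne_bot : ∀ i, gFun gi (z i) ≠ ⊥ :=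
    fun i => ne_of_gt (lt_of_lt_of_le (EReal.bot_lt_coe _) (hgi_le i))
  have hgr : ∀ i, gFun gi (z i) = (((gFun gi (z i)).toReal : ℝ) : EReal) :=
    fun i => (EReal.coe_toReal (hg_ne_top i) (hg_ne_bot i)).symm
  have ht_le : ∀ i, (p.1 i).2.2 ≤ (gFun gi (z i)).toReal := by
    intro i
    have := hgi_le i
    rw [hgr i] at this
    exact EReal.coe_le_coe_iff.mp this
  have hh_ne_top : ∀ j i, h j (z i) ≠ ⊤ :=
    fun j i => ne_of_lt (lt_of_le_of_lt ((hU i).2.1 j) (EReal.coe_lt_top _))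
  have hh_ne_bot : ∀ j i, h j (z i) ≠ ⊥ := fun j i => (hH j).1.1 (z i)
  have hhr : ∀ j i, h j (z i) = (((h j (z i)).toReal : ℝ) : EReal) :=
    fun j i => (EReal.coe_toReal (hh_ne_top j i) (hh_ne_bot j i)).symm
  have hs_le : ∀ j i, (h j (z i)).toReal ≤ (p.1 i).2.1 j := by
    intro j i
    have := (hU i).2.1 j
    rw [hhr j i] at this
    exact EReal.coe_le_coe_iff.mp this
  have hfrObj : frObj gi (fun i => (p.1 i).1, p.2)
      = ((∑ i, p.2 i * (gFun gi (z i)).toReal : ℝ) : EReal) := by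
    rw [ecoe_sum]
    refine Finset.sum_congr rfl fun i _ => ?_
    rw [EReal.coe_mul, ← hgr i]
  constructor
  · refine ⟨fun i => ?_, hl0, hl1, fun j => ?_, ?_⟩
    · exact Set.mem_iUnion.2 ⟨i, (hU i).1,
        fun j => lt_of_le_of_lt ((hU i).2.1 j) (EReal.coe_lt_top _),
        lt_of_lt_of_le (EReal.bot_lt_coe _) (hU i).2.2⟩
    · have heq : (∑ i, ((p.2 i : ℝ) : EReal) * h j ((fun i => (p.1 i).1, p.2).1 i))
          = ((∑ i, p.2 i * (h j (z i)).toReal : ℝ) : EReal) := by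
        rw [ecoe_sum]
        refine Finset.sum_congr rfl fun i _ => ?_
        rw [EReal.coe_mul, ← hhr j i]
      rw [heq]
      refine EReal.coe_le_coe_iff.mpr (le_trans ?_ (hmom j))
      exact Finset.sum_le_sum fun i _ =>
        mul_le_mul_of_nonneg_left (hs_le j i) (hl0 i)
    · rw [hfrObj]; exact EReal.coe_ne_bot _
  · rw [hfrObj]
    refine EReal.coe_le_coe_iff.mpr ?_
    exact Finset.sum_le_sum fun i _ => mul_le_mul_of_nonneg_left (ht_le i) (hl0 i)

/-- Mapping a feasible point of (FR) to a feasible point of (AD-B) with the same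
objective value. -/
private lemma fr_to_adb {dz I J L : ℕ}
    {gi : Fin I → (Fin dz → ℝ) → EReal} {c : Fin L → (Fin dz → ℝ) → EReal}
    {h : Fin J → (Fin dz → ℝ) → EReal} {μ : Fin J → ℝ}
    (hG : AssumptionG gi) (hC : AssumptionC c) (hH : AssumptionH h)
    (hS : AssumptionS gi c h)
    {p : (Fin I → Fin dz → ℝ) × (Fin I → ℝ)} (hp : p ∈ frFeas gi c h μ) :
    ∃ q ∈ adbFeas gi c h μ,
      (((∑ i, q.2 i * (q.1 i).2.2 : ℝ)) : EReal) = frObj gi p := by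
  classical
  obtain ⟨hzS, hl0, hl1, hmom, hobj⟩ := hp
  set z : Fin I → Fin dz → ℝ := p.1 with hzdef
  set lam : Fin I → ℝ := p.2 with hlamdef
  have hI : Nonempty (Fin I) := by
    rcases Nat.eq_zero_or_pos I with hI0 | hI0
    · exfalso; subst hI0; simp at hl1
    · exact ⟨⟨0, hI0⟩⟩
  -- select the index attaining the max
  have hselx : ∀ i, ∃ m, gFun gi (z i) = gi m (z i) := fun i => gFun_attained hI gi (z i)
  choose sel hsel using hselx
  -- real values
  have hg_ne_top : ∀ i, gFun gi (z i) ≠ ⊤ := fun i => gFun_ne_top hG hI (z i)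
  have hg_ne_bot : ∀ i, gFun gi (z i) ≠ ⊥ := by
    intro i
    obtain ⟨m, hm⟩ := Set.mem_iUnion.1 (hzS i)
    exact ne_of_gt (lt_of_lt_of_le hm.2.2 (le_iSup (fun m => gi m (z i)) m))
  set r : Fin I → ℝ := fun i => (gFun gi (z i)).toReal with hrdef
  have hr : ∀ i, gFun gi (z i) = ((r i : ℝ) : EReal) :=
    fun i => (EReal.coe_toReal (hg_ne_top i) (hg_ne_bot i)).symm
  have hh_ne_top : ∀ j i, h j (z i) ≠ ⊤ := by
    intro j i
    obtain ⟨m, hm⟩ := Set.mem_iUnion.1 (hzS i)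
    exact ne_of_lt (hm.2.1 j)
  have hh_ne_bot : ∀ j i, h j (z i) ≠ ⊥ := fun j i => (hH j).1.1 (z i)
  set s : Fin J → Fin I → ℝ := fun j i => (h j (z i)).toReal with hsdef
  have hs : ∀ j i, h j (z i) = ((s j i : ℝ) : EReal) :=
    fun j i => (EReal.coe_toReal (hh_ne_top j i) (hh_ne_bot j i)).symm
  have hzSset : ∀ i, z i ∈ Sset c := by
    intro i
    obtain ⟨m, hm⟩ := Set.mem_iUnion.1 (hzS i)
    exact hm.1
  -- grouping
  set T : Fin I → Finset (Fin I) := fun k => Finset.univ.filter (fun i => sel i = k)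
    with hTdef
  set Lam : Fin I → ℝ := fun k => ∑ i ∈ T k, lam i with hLamdef
  have hLam0 : ∀ k, 0 ≤ Lam k := fun k => Finset.sum_nonneg fun i _ => hl0 i
  have hLamsum : ∑ k, Lam k = 1 := by
    rw [← hl1]
    exact Finset.sum_fiberwise_of_maps_to (fun i _ => Finset.mem_univ (sel i)) lam
  have hzero : ∀ k, Lam k = 0 → ∀ i ∈ T k, lam i = 0 := by
    intro k hk i hi
    exact (Finset.sum_eq_zero_iff_of_nonneg fun i _ => hl0 i).mp hk i hi
  -- default points
  have hw : ∀ k, (hS k).choose ∈ SbarI gi c h k := fun k => (hS k).choose_spec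
  set w : Fin I → Fin dz → ℝ := fun k => (hS k).choose with hwdef
  -- candidate point
  set qz : Fin I → Fin dz → ℝ :=
    fun k => if 0 < Lam k then ∑ i ∈ T k, (lam i / Lam k) • z i else w k with hqzdef
  set qu : Fin I → Fin J → ℝ :=
    fun k j => if 0 < Lam k then ∑ i ∈ T k, (lam i / Lam k) * s j i
              else (h j (w k)).toReal with hqudef
  set qt : Fin I → ℝ :=
    fun k => if 0 < Lam k then ∑ i ∈ T k, (lam i / Lam k) * r i
            else (gi k (w k)).toReal with hqtdef
  have hkey : ∀ (k : Fin I) (f : Fin I → ℝ) (d : ℝ),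
      Lam k * (if 0 < Lam k then ∑ i ∈ T k, (lam i / Lam k) * f i else d)
        = ∑ i ∈ T k, lam i * f i := by
    intro k f d
    by_cases hk : 0 < Lam k
    · rw [if_pos hk, Finset.mul_sum]
      refine Finset.sum_congr rfl fun i _ => ?_
      field_simp
    · rw [if_neg hk]
      have hk0 : Lam k = 0 := le_antisymm (not_lt.1 hk) (hLam0 k)
      rw [hk0, zero_mul]
      exact (Finset.sum_eq_zero fun i hi => by rw [hzero k hk0 i hi, zero_mul]).symm
  -- membership in the augmented support sets
  have hmemU : ∀ k, ((qz k, qu k, qt k) : (Fin dz → ℝ) × (Fin J → ℝ) × ℝ)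
      ∈ Uset gi c h k := by
    intro k
    by_cases hk : 0 < Lam k
    · have hν0 : ∀ i ∈ T k, 0 ≤ lam i / Lam k := fun i _ => div_nonneg (hl0 i) (hLam0 k)
      have hν1 : ∑ i ∈ T k, lam i / Lam k = 1 := by
        rw [← Finset.sum_div]
        exact div_self hk.ne'
      have hqz' : qz k = ∑ i ∈ T k, (lam i / Lam k) • z i := by rw [hqzdef]; simp [hk]
      refine ⟨fun ℓ => ?_, fun j => ?_, ?_⟩
      · -- support constraints
        show c ℓ (qz k) ≤ 0
        have := convexFn_combo (hC ℓ).2.2 (T k) (fun i => lam i / Lam k) z (fun _ => 0)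
          hν0 hν1 (fun i _ => by rw [EReal.coe_zero]; exact hzSset i ℓ)
        rw [hqz']
        simpa using this
      · -- moment epigraph
        show h j (qz k) ≤ ((qu k j : ℝ) : EReal)
        have := convexFn_combo (hH j).2.2 (T k) (fun i => lam i / Lam k) z (s j)
          hν0 hν1 (fun i _ => le_of_eq (hs j i))
        rw [hqz']
        have hqu' : qu k j = ∑ i ∈ T k, (lam i / Lam k) * s j i := by
          rw [hqudef]; simp [hk]
        rw [hqu']
        exact this
      · -- hypograph of gi k
        show ((qt k : ℝ) : EReal) ≤ gi k (qz k)
        have hle : ∀ i ∈ T k, (fun x => - gi k x) (z i) ≤ (((- r i : ℝ)) : EReal) := by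
          intro i hi
          have hik : sel i = k := by
            simpa [hTdef] using hi
          have : gi k (z i) = ((r i : ℝ) : EReal) := by
            rw [← hik, ← hsel i]; exact hr i
          rw [EReal.coe_neg]
          exact le_of_eq (show -gi k (z i) = -(((r i : ℝ)) : EReal) by rw [this])
        have hcc := convexFn_combo (hG k).2.2 (T k) (fun i => lam i / Lam k) z
          (fun i => - r i) hν0 hν1 hle
        have hsum : (∑ i ∈ T k, (lam i / Lam k) * (- r i) : ℝ)
            = - ∑ i ∈ T k, (lam i / Lam k) * r i := by
          rw [← Finset.sum_neg_distrib]
          exact Finset.sum_congr rfl fun i _ => by ring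
        rw [hsum, EReal.coe_neg] at hcc
        have hqt' : qt k = ∑ i ∈ T k, (lam i / Lam k) * r i := by
          rw [hqtdef]; simp [hk]
        rw [hqt', ← hqz'] at *
        -- hcc : - gi k (qz k) ≤ - ↑(qt k)
        have := EReal.neg_le_neg_iff.mp hcc
        rw [hqt']
        exact this
    · have hqz' : qz k = w k := by rw [hqzdef]; simp [hk]
      obtain ⟨hwS, hwh, hwg⟩ := hw k
      refine ⟨fun ℓ => ?_, fun j => ?_, ?_⟩
      · show c ℓ (qz k) ≤ 0
        rw [hqz']; exact hwS ℓ
      · show h j (qz k) ≤ ((qu k j : ℝ) : EReal)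
        have hqu' : qu k j = (h j (w k)).toReal := by rw [hqudef]; simp [hk]
        rw [hqz', hqu']
        exact le_of_eq (EReal.coe_toReal (ne_of_lt (hwh j)) ((hH j).1.1 (w k))).symm
      · show ((qt k : ℝ) : EReal) ≤ gi k (qz k)
        have hqt' : qt k = (gi k (w k)).toReal := by rw [hqtdef]; simp [hk]
        rw [hqz', hqt']
        exact le_of_eq (EReal.coe_toReal (gi_ne_top hG k (w k)) (ne_of_gt hwg))
  -- the moment sums
  have hu_sum : ∀ j, ∑ k, Lam k * qu k j = ∑ i, lam i * s j i := by
    intro j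
    have : ∀ k, Lam k * qu k j = ∑ i ∈ T k, lam i * s j i := by
      intro k
      rw [hqudef]
      exact hkey k (fun i => s j i) ((h j (w k)).toReal)
    rw [Finset.sum_congr rfl fun k _ => this k]
    exact Finset.sum_fiberwise_of_maps_to (fun i _ => Finset.mem_univ (sel i)) _
  have ht_sum : ∑ k, Lam k * qt k = ∑ i, lam i * r i := by
    have : ∀ k, Lam k * qt k = ∑ i ∈ T k, lam i * r i := by
      intro k
      rw [hqtdef]
      exact hkey k r ((gi k (w k)).toReal)
    rw [Finset.sum_congr rfl fun k _ => this k]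
    exact Finset.sum_fiberwise_of_maps_to (fun i _ => Finset.mem_univ (sel i)) _
  -- FR data in real form
  have hmomr : ∀ j, ∑ i, lam i * s j i ≤ μ j := by
    intro j
    have heq : (∑ i, ((lam i : ℝ) : EReal) * h j (z i))
        = ((∑ i, lam i * s j i : ℝ) : EReal) := by
      rw [ecoe_sum]
      exact Finset.sum_congr rfl fun i _ => by rw [EReal.coe_mul, ← hs j i]
    have := hmom j
    rw [heq] at this
    exact EReal.coe_le_coe_iff.mp this
  have hfrObj : frObj gi p = ((∑ i, lam i * r i : ℝ) : EReal) := by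
    rw [ecoe_sum]
    exact Finset.sum_congr rfl fun i _ => by rw [EReal.coe_mul, ← hr i]
  refine ⟨(fun k => (qz k, qu k, qt k), Lam), ⟨hmemU, hLam0, hLamsum, fun j => ?_⟩, ?_⟩
  · calc ∑ k, Lam k * qu k j = ∑ i, lam i * s j i := hu_sum j
      _ ≤ μ j := hmomr j
  · rw [hfrObj]
    exact congrArg _ ht_sum

/-- **Equivalence of (FR) and (AD-B)** (Proposition 4.2): under assumptions (G), (C),
(H) and (S), the suprema of (FR) and (AD-B) coincide, and (FR) is solvable if and only
if (AD-B) is solvable. -/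
theorem fr_eq_adb (dz I J L : ℕ)
    (gi : Fin I → (Fin dz → ℝ) → EReal) (c : Fin L → (Fin dz → ℝ) → EReal)
    (h : Fin J → (Fin dz → ℝ) → EReal) (μ : Fin J → ℝ)
    (hG : AssumptionG gi) (hC : AssumptionC c) (hH : AssumptionH h)
    (hS : AssumptionS gi c h) (hSne : (Sset c).Nonempty) :
    frVal gi c h μ = adbVal gi c h μ ∧
    (frSolvable gi c h μ ↔ adbSolvable gi c h μ) := by
  classical
  -- value inequalities
  have hle1 : adbVal gi c h μ ≤ frVal gi c h μ := by
    refine iSup₂_le fun q hq => ?_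
    obtain ⟨hmem, hobj⟩ := adb_to_fr hG hH hq
    exact le_trans hobj (le_iSup₂ (f := fun p _ => frObj gi p) _ hmem)
  have hle2 : frVal gi c h μ ≤ adbVal gi c h μ := by
    refine iSup₂_le fun p hp => ?_
    obtain ⟨q, hqmem, hqobj⟩ := fr_to_adb hG hC hH hS hp
    rw [← hqobj]
    exact le_iSup₂ (f := fun q (_ : q ∈ adbFeas gi c h μ) =>
      (((∑ i, q.2 i * (q.1 i).2.2 : ℝ)) : EReal)) _ hqmem
  have hval : frVal gi c h μ = adbVal gi c h μ := le_antisymm hle2 hle1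
  refine ⟨hval, ?_⟩
  constructor
  · rintro (hempty | ⟨p, hpmem, hpval⟩)
    · left
      rw [Set.eq_empty_iff_forall_notMem]
      intro q hq
      exact Set.eq_empty_iff_forall_notMem.mp hempty _ (adb_to_fr hG hH hq).1
    · right
      obtain ⟨q, hqmem, hqobj⟩ := fr_to_adb hG hC hH hS hpmem
      exact ⟨q, hqmem, by rw [hqobj, hpval, hval]⟩
  · rintro (hempty | ⟨q, hqmem, hqval⟩)
    · left
      rw [Set.eq_empty_iff_forall_notMem]
      intro p hp
      obtain ⟨q, hqmem, -⟩ := fr_to_adb hG hC hH hS hp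
      exact Set.eq_empty_iff_forall_notMem.mp hempty _ hqmem
    · right
      obtain ⟨hmem, hobj⟩ := adb_to_fr hG hH hqmem
      refine ⟨_, hmem, le_antisymm
        (le_iSup₂ (f := fun p _ => frObj gi p) _ hmem) ?_⟩
      calc frVal gi c h μ = adbVal gi c h μ := hval
        _ = _ := hqval.symm
        _ ≤ _ := hobj
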